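/- arXiv:1401.3582 — 7 statements merged into one kernel-verified Lean document; each statement's English description precedes it below -/
import Mathlib

section
/- Let q > 0 be a real number, k ≤ n natural numbers, and A_0,…,A_n and B_0,…,B_n real numbers such that Σ_{j=0}^n A_j x^{n-j} y^j = q^{k-n} Σ_{j=0}^n B_j (x+(q-1)y)^{n-j} (x-y)^j as polynomials. Then for every r with 0 ≤ r ≤ n: Σ_{j=0}^n C(j, r) A_j = q^{k-r} Σ_{j=0}^n (-1)^j (q-1)^{r-j} C(n-j, r-j) B_j. -/
open Finset

open Polynomial
lemma my_coeff (a b : ℝ) (m i : ℕ) :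
    ((Polynomial.C b * Polynomial.X + Polynomial.C a)^m).coeff i
      = b^i * a^(m-i) * m.choose i := by
  rw [add_pow, finset_sum_coeff]
  have : ∀ x ∈ range (m+1), ((C b * X) ^ x * C a ^ (m - x) * (m.choose x : ℝ[X])).coeff i
      = if x = i then b^i * a^(m-i) * m.choose i else 0 := by
    intro x hx
    rw [mul_pow, ← C_pow, ← C_pow, ← C_eq_natCast, coeff_mul_C, coeff_mul_C, coeff_C_mul,
      coeff_X_pow]
    by_cases hxi : x = i
    · subst hxi; simp
    · rw [if_neg (fun hh => hxi hh.symm), if_neg hxi]; ring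
  rw [Finset.sum_congr rfl this, Finset.sum_ite_eq' (range (m+1)) i]
  split_ifs with hi
  · rfl
  · simp only [mem_range, not_lt] at hi
    simp [Nat.choose_eq_zero_of_lt (lt_of_lt_of_le (Nat.lt_succ_self m) hi)]

theorem mac_to_form3 (q : ℝ) (hq : 0 < q) (k n : ℕ) (hkn : k ≤ n) (A B : ℕ → ℝ)
    (h : ∀ x y : ℝ,
      ∑ j ∈ Finset.range (n + 1), A j * x ^ (n - j) * y ^ j =
      q ^ ((k : ℤ) - (n : ℤ)) *
        ∑ j ∈ Finset.range (n + 1), B j * (x + (q - 1) * y) ^ (n - j) * (x - y) ^ j) :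
    ∀ r ≤ n,
      ∑ j ∈ Finset.range (n + 1), (j.choose r : ℝ) * A j =
      q ^ ((k : ℤ) - (r : ℤ)) *
        ∑ j ∈ Finset.range (n + 1),
          if j ≤ r then
            (-1 : ℝ) ^ j * (q - 1) ^ (r - j) * ((n - j).choose (r - j) : ℝ) * B j
          else 0 := by
  intro r hr
  set P : ℝ[X] := ∑ j ∈ range (n+1), C (A j) * (X + 1)^j with hP
  set Q : ℝ[X] := C (q ^ ((k:ℤ)-(n:ℤ))) *
      ∑ j ∈ range (n+1), C (B j) * (C (q-1) * X + C q)^(n-j) * (-X)^j with hQ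
  have hPQ : P = Q := by
    apply Polynomial.funext
    intro z
    have hz := h 1 (z + 1)
    simp only [one_pow, one_mul, mul_one] at hz
    rw [hP, hQ]
    simp only [eval_finset_sum, eval_mul, eval_C, eval_pow, eval_add, eval_X, eval_one,
      eval_neg]
    calc ∑ j ∈ range (n+1), A j * (z+1)^j
        = ∑ j ∈ range (n+1), A j * (z+1)^j := rfl
      _ = q ^ ((k:ℤ)-(n:ℤ)) * ∑ j ∈ range (n+1),
            B j * (1 + (q-1)*(z+1))^(n-j) * (1-(z+1))^j := hz
      _ = q ^ ((k:ℤ)-(n:ℤ)) * ∑ j ∈ range (n+1),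
            B j * ((q-1)*z + q)^(n-j) * (-z)^j := by
          congr 1; apply Finset.sum_congr rfl; intro j _; ring_nf
  -- coefficient r of P
  have hcP : P.coeff r = ∑ j ∈ range (n+1), (j.choose r : ℝ) * A j := by
    rw [hP, finset_sum_coeff]
    apply Finset.sum_congr rfl
    intro j _
    rw [coeff_C_mul, coeff_X_add_one_pow, mul_comm]
  -- coefficient r of Q
  have hcQ : Q.coeff r = q ^ ((k:ℤ)-(n:ℤ)) * q ^ (n - r) *
      ∑ j ∈ range (n+1),
        if j ≤ r then
          (-1 : ℝ) ^ j * (q - 1) ^ (r - j) * ((n - j).choose (r - j) : ℝ) * B j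
        else 0 := by
    rw [hQ, coeff_C_mul, finset_sum_coeff, mul_assoc]
    congr 1
    rw [Finset.mul_sum]
    apply Finset.sum_congr rfl
    intro j hj
    simp only [mem_range, Nat.lt_succ_iff] at hj
    have : C (B j) * (C (q-1) * X + C q)^(n-j) * (-X)^j
        = C (B j * (-1)^j) * ((C (q-1) * X + C q)^(n-j) * X^j) := by
      rw [neg_pow, C_mul, show (C ((-1:ℝ)^j) : ℝ[X]) = (-1)^j by rw [C_pow, C_neg, C_1]]
      ring
    rw [this, coeff_C_mul, coeff_mul_X_pow']
    split_ifs with hjr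
    · rw [my_coeff]
      have h1 : (n - j) - (r - j) = n - r := by omega
      rw [h1]
      ring
    · ring
  have hfin : Q.coeff r = ∑ j ∈ range (n+1), (j.choose r : ℝ) * A j := by
    rw [← hPQ, hcP]
  rw [← hfin, hcQ]
  congr 1
  rw [← zpow_natCast q (n - r), ← zpow_add₀ (ne_of_gt hq)]
  congr 1
  rw [Nat.cast_sub hr]
  ring
end

section
/- Let q > 0 be a real number, k ≤ n natural numbers, and A_0,…,A_n and B_0,…,B_n real numbers such that Σ_{j=0}^n A_j x^{n-j} y^j = q^{k-n} Σ_{j=0}^n B_j (x+(q-1)y)^{n-j} (x-y)^j as polynomials. Then for every r with 0 ≤ r ≤ n: Σ_{j=0}^n C(n-j, r) A_j = q^{k-r} Σ_{j=0}^n C(n-j, r-j) B_j. -/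
open Finset

theorem mac_to_form4 (q : ℝ) (hq : 0 < q) (k n : ℕ) (hkn : k ≤ n) (A B : ℕ → ℝ)
    (h : ∀ x y : ℝ,
      ∑ j ∈ Finset.range (n + 1), A j * x ^ (n - j) * y ^ j =
      q ^ ((k : ℤ) - (n : ℤ)) *
        ∑ j ∈ Finset.range (n + 1), B j * (x + (q - 1) * y) ^ (n - j) * (x - y) ^ j) :
    ∀ r ≤ n,
      ∑ j ∈ Finset.range (n + 1), ((n - j).choose r : ℝ) * A j =
      q ^ ((k : ℤ) - (r : ℤ)) *
        ∑ j ∈ Finset.range (n + 1),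
          if j ≤ r then ((n - j).choose (r - j) : ℝ) * B j else 0 := by
  intro r hr
  have hq0 : (q : ℝ) ≠ 0 := ne_of_gt hq
  have key : ∀ s : ℝ,
      ∑ j ∈ Finset.range (n + 1), A j * (s + 1) ^ (n - j) =
      q ^ ((k : ℤ) - (n : ℤ)) *
        ∑ j ∈ Finset.range (n + 1), B j * (s + q) ^ (n - j) * s ^ j := by
    intro s
    have := h (s + 1) 1
    simpa [show s + 1 + (q - 1) * 1 = s + q by ring] using this
  set P : Polynomial ℝ :=
    ∑ j ∈ Finset.range (n + 1), Polynomial.C (A j) * (Polynomial.X + 1) ^ (n - j) with hP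
  set Q : Polynomial ℝ :=
    Polynomial.C (q ^ ((k : ℤ) - (n : ℤ))) *
      ∑ j ∈ Finset.range (n + 1),
        Polynomial.C (B j) * (Polynomial.X + Polynomial.C q) ^ (n - j) * Polynomial.X ^ j
    with hQ
  have hPQ : P = Q := by
    apply Polynomial.funext
    intro s
    simp only [hP, hQ, Polynomial.eval_mul, Polynomial.eval_finset_sum,
      Polynomial.eval_pow, Polynomial.eval_add, Polynomial.eval_C, Polynomial.eval_X,
      Polynomial.eval_one]
    exact key s
  have hc := congrArg (fun p => Polynomial.coeff p r) hPQ
  simp only [hP, hQ, Polynomial.finset_sum_coeff, Polynomial.coeff_C_mul,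
    Polynomial.coeff_mul_X_pow', Polynomial.coeff_X_add_one_pow,
    Polynomial.coeff_X_add_C_pow] at hc
  calc ∑ j ∈ Finset.range (n + 1), ((n - j).choose r : ℝ) * A j
      = ∑ j ∈ Finset.range (n + 1), A j * ((n - j).choose r : ℝ) := by
        simp [mul_comm]
    _ = q ^ ((k : ℤ) - (n : ℤ)) *
          ∑ j ∈ Finset.range (n + 1),
            if j ≤ r then B j * (q ^ (n - j - (r - j)) * ((n - j).choose (r - j) : ℝ)) else 0 := hc
    _ = q ^ ((k : ℤ) - (r : ℤ)) *
        ∑ j ∈ Finset.range (n + 1),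
          if j ≤ r then ((n - j).choose (r - j) : ℝ) * B j else 0 := by
        rw [Finset.mul_sum, Finset.mul_sum]
        refine Finset.sum_congr rfl fun j hj => ?_
        by_cases hjr : j ≤ r
        · simp only [hjr, if_true]
          have h1 : n - j - (r - j) = n - r := by omega
          have h2 : q ^ ((k : ℤ) - (n : ℤ)) * q ^ (n - r) = q ^ ((k : ℤ) - (r : ℤ)) := by
            rw [← zpow_natCast q (n - r), ← zpow_add₀ hq0]
            congr 1
            have : ((n - r : ℕ) : ℤ) = (n : ℤ) - (r : ℤ) := by omega
            omega
          rw [h1]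
          calc q ^ ((k : ℤ) - (n : ℤ)) * (B j * (q ^ (n - r) * ((n - j).choose (r - j) : ℝ)))
              = (q ^ ((k : ℤ) - (n : ℤ)) * q ^ (n - r)) * (((n - j).choose (r - j) : ℝ) * B j) := by
                ring
            _ = q ^ ((k : ℤ) - (r : ℤ)) * (((n - j).choose (r - j) : ℝ) * B j) := by rw [h2]
        · simp [hjr]
end

section
/- Let q > 0 be a real number, k ≤ n natural numbers, and A_0,…,A_n and B_0,…,B_n real numbers such that Σ_{j=0}^n A_j x^{n-j} y^j = q^{k-n} Σ_{j=0}^n B_j (x+(q-1)y)^{n-j} (x-y)^j as polynomials. Then for all natural numbers t ≤ r ≤ n: Σ_{j=0}^n C(j,t) C(n-j, r-t) A_j = q^{k-r} Σ_{i=0}^t (-1)^i (q-1)^{t-i} Σ_{j=0}^r C(n-j, r-j) C(j, i) C(r-j, t-i) B_j. -/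
open Finset

private theorem coeff_linear_pow' {R : Type*} [CommRing R] (u v : R) (m b : ℕ) :
    ((Polynomial.C v * Polynomial.X + Polynomial.C u)^m).coeff b
      = (m.choose b : R) * v^b * u^(m-b) := by
  open Polynomial in
  rw [add_pow, finset_sum_coeff]
  rw [Finset.sum_eq_single b]
  · rw [mul_pow, ← C_pow, ← C_pow, ← C_eq_natCast]
    have : C (v^b) * X ^ b * C (u^(m-b)) * C ((m.choose b : R))
        = C (v^b) * (C (u^(m-b)) * (C ((m.choose b : R)) * X ^ b)) := by ring
    rw [this, coeff_C_mul, coeff_C_mul, coeff_C_mul, coeff_X_pow]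
    simp; ring
  · intro i _ hib
    rw [mul_pow, ← Polynomial.C_pow, ← Polynomial.C_pow, ← Polynomial.C_eq_natCast]
    have : Polynomial.C (v^i) * Polynomial.X ^ i * Polynomial.C (u^(m-i)) * Polynomial.C ((m.choose i : R))
        = Polynomial.C (v^i) * (Polynomial.C (u^(m-i)) * (Polynomial.C ((m.choose i : R)) * Polynomial.X ^ i)) := by ring
    rw [this, Polynomial.coeff_C_mul, Polynomial.coeff_C_mul, Polynomial.coeff_C_mul, Polynomial.coeff_X_pow]
    simp [Ne.symm hib]
  · intro hb
    simp only [Finset.mem_range, not_lt] at hb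
    simp [Nat.choose_eq_zero_of_lt hb]

private theorem coeff_term' (q x1 x2 : ℝ) (m1 m2 : ℕ) (M e b : ℕ) :
    (((m1 : Polynomial ℝ) * Polynomial.C x1 * (Polynomial.X + Polynomial.C q)^M *
      ((m2 : Polynomial ℝ) * Polynomial.C x2 * Polynomial.X^e))).coeff b
    = (m1:ℝ) * x1 * m2 * x2 * (if e ≤ b then q^(M-(b-e)) * (M.choose (b-e):ℝ) else 0) := by
  open Polynomial in
  have h1 : ((m1 : ℝ[X]) * C x1 * (X + C q)^M * ((m2 : ℝ[X]) * C x2 * X^e))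
      = (m1 : ℝ[X]) * (C x1 * ((m2 : ℝ[X]) * (C x2 * ((X + C q)^M * X^e)))) := by ring
  open Polynomial in
  rw [h1, coeff_natCast_mul, coeff_C_mul, coeff_natCast_mul, coeff_C_mul, coeff_mul_X_pow']
  by_cases he : e ≤ b
  · rw [if_pos he, if_pos he, Polynomial.coeff_X_add_C_pow]
    ring
  · rw [if_neg he, if_neg he]
    ring

theorem mac_to_form5 (q : ℝ) (hq : 0 < q) (k n : ℕ) (hkn : k ≤ n) (A B : ℕ → ℝ)
    (h : ∀ x y : ℝ,
      ∑ j ∈ Finset.range (n + 1), A j * x ^ (n - j) * y ^ j =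
      q ^ ((k : ℤ) - (n : ℤ)) *
        ∑ j ∈ Finset.range (n + 1), B j * (x + (q - 1) * y) ^ (n - j) * (x - y) ^ j) :
    ∀ t r : ℕ, t ≤ r → r ≤ n →
      ∑ j ∈ Finset.range (n + 1), (j.choose t : ℝ) * ((n - j).choose (r - t) : ℝ) * A j =
      q ^ ((k : ℤ) - (r : ℤ)) *
        ∑ i ∈ Finset.range (t + 1),
          (-1 : ℝ) ^ i * (q - 1) ^ (t - i) *
            ∑ j ∈ Finset.range (r + 1),
              ((n - j).choose (r - j) : ℝ) * (j.choose i : ℝ) * ((r - j).choose (t - i) : ℝ) * B j := by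
  open Polynomial in
  intro t r htr hrn
  have hqne : q ≠ 0 := ne_of_gt hq
  set PA : (Polynomial ℝ)[X] :=
    ∑ j ∈ Finset.range (n+1), C ((X + 1 : ℝ[X])^(n-j) * C (A j)) * (X + 1)^j with hPA
  set PB : (Polynomial ℝ)[X] :=
    C (C (q ^ ((k : ℤ) - (n : ℤ)))) *
      ∑ j ∈ Finset.range (n+1), C (C (B j)) * (C (C (q-1)) * X + C (X + C q))^(n-j)
        * (C (-1 : ℝ[X]) * X + C X)^j with hPB
  -- Step 1 : PA = PB
  have hPAPB : PA = PB := by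
    rw [hPA, hPB]
    apply Polynomial.funext; intro ρ
    apply Polynomial.funext; intro s
    simp only [eval_finset_sum, eval_mul, eval_add, eval_pow, eval_C, eval_X, eval_one, eval_neg, eval_sub]
    have H := h (s + 1) (eval s ρ + 1)
    set w := eval s ρ
    calc ∑ j ∈ Finset.range (n+1), (s+1)^(n-j) * A j * (w+1)^j
        = ∑ j ∈ Finset.range (n + 1), A j * (s+1) ^ (n - j) * (w+1) ^ j := by
          apply Finset.sum_congr rfl; intro j _; ring
      _ = q ^ ((k : ℤ) - (n : ℤ)) * ∑ j ∈ Finset.range (n + 1),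
            B j * ((s+1) + (q - 1) * (w+1)) ^ (n - j) * ((s+1) - (w+1)) ^ j := H
      _ = q ^ ((k : ℤ) - (n : ℤ)) * ∑ j ∈ Finset.range (n+1),
            B j * ((q-1) * w + (s + q)) ^ (n - j) * (-1 * w + s) ^ j := by
          apply congrArg
          apply Finset.sum_congr rfl; intro j _
          have e1 : (s+1) + (q - 1) * (w+1) = (q-1) * w + (s + q) := by ring
          have e2 : (s+1) - (w+1) = -1 * w + s := by ring
          rw [e1, e2]
  -- Step 2 : LHS = coeff of PA
  have e1 : ((PA.coeff t).coeff (r-t))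
      = ∑ j ∈ Finset.range (n+1), (j.choose t : ℝ) * ((n - j).choose (r-t) : ℝ) * A j := by
    rw [hPA, finset_sum_coeff, Polynomial.finset_sum_coeff]
    apply Finset.sum_congr rfl; intro j _
    rw [coeff_C_mul, coeff_X_add_one_pow]
    rw [mul_comm, ← Polynomial.C_eq_natCast, ← mul_assoc, mul_right_comm, ← C_mul]
    rw [coeff_C_mul, coeff_X_add_one_pow]
    ring
  -- Step 3 : coeff of PB, explicit form
  have e2 : ((PB.coeff t).coeff (r-t))
      = q ^ ((k : ℤ) - (n : ℤ)) * ∑ j ∈ Finset.range (n+1), B j *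
          ∑ d ∈ Finset.range (t+1), ((n-j).choose d : ℝ) * (q-1)^d * ((j.choose (t-d)) : ℝ) * (-1:ℝ)^(t-d) *
            (if j-(t-d) ≤ r-t then q^((n-j-d)-((r-t)-(j-(t-d)))) * (((n-j-d).choose ((r-t)-(j-(t-d)))) : ℝ) else 0) := by
    rw [hPB, coeff_C_mul, coeff_C_mul, finset_sum_coeff, Polynomial.finset_sum_coeff]
    apply congrArg
    apply Finset.sum_congr rfl; intro j _
    rw [mul_assoc, coeff_C_mul, coeff_C_mul, coeff_mul, Finset.Nat.sum_antidiagonal_eq_sum_range_succ_mk]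
    rw [Polynomial.finset_sum_coeff, Finset.mul_sum, Finset.mul_sum]
    simp only [Nat.succ_eq_add_one]
    apply Finset.sum_congr rfl; intro d _
    rw [coeff_linear_pow', coeff_linear_pow']
    rw [← C_pow]
    have hneg : ((-1 : ℝ[X]))^(t-d) = C ((-1:ℝ)^(t-d)) := by simp
    rw [hneg, coeff_term']
  -- Step 4 : combinatorial identity
  have e3 : q ^ ((k : ℤ) - (n : ℤ)) * (∑ j ∈ Finset.range (n+1), B j *
          ∑ d ∈ Finset.range (t+1), ((n-j).choose d : ℝ) * (q-1)^d * ((j.choose (t-d)) : ℝ) * (-1:ℝ)^(t-d) *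
            (if j-(t-d) ≤ r-t then q^((n-j-d)-((r-t)-(j-(t-d)))) * (((n-j-d).choose ((r-t)-(j-(t-d)))) : ℝ) else 0))
      = q ^ ((k : ℤ) - (r : ℤ)) *
        ∑ i ∈ Finset.range (t + 1),
          (-1 : ℝ) ^ i * (q - 1) ^ (t - i) *
            ∑ j ∈ Finset.range (r + 1),
              ((n - j).choose (r - j) : ℝ) * (j.choose i : ℝ) * ((r - j).choose (t - i) : ℝ) * B j := by
    set g : ℕ → ℕ → ℝ := fun j d => ((n-j).choose d : ℝ) * (q-1)^d * ((j.choose (t-d)) : ℝ) * (-1:ℝ)^(t-d) *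
            (if j-(t-d) ≤ r-t then q^((n-j-d)-((r-t)-(j-(t-d)))) * (((n-j-d).choose ((r-t)-(j-(t-d)))) : ℝ) else 0) with hg
    have hrefl : ∀ j, ∑ d ∈ Finset.range (t+1), g j d = ∑ i ∈ Finset.range (t+1), g j (t-i) := by
      intro j
      rw [← Finset.sum_range_reflect]
      apply Finset.sum_congr rfl; intro i _
      congr 1
    have key : ∀ i ∈ Finset.range (t+1),
        ∑ j ∈ Finset.range (n+1), B j * g j (t-i)
        = (-1:ℝ)^i * (q-1)^(t-i) * q^(n-r) *
            ∑ j ∈ Finset.range (r+1), ((n - j).choose (r - j) : ℝ) * (j.choose i : ℝ) * ((r - j).choose (t - i) : ℝ) * B j := by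
      intro i hi
      rw [Finset.mem_range] at hi
      have hit : i ≤ t := by omega
      rw [Finset.mul_sum, ← Finset.sum_subset (Finset.range_subset_range.2 (by omega : r+1 ≤ n+1))]
      · apply Finset.sum_congr rfl; intro j hj
        rw [Finset.mem_range] at hj
        have hjr : j ≤ r := by omega
        simp only [hg, Nat.sub_sub_self hit]
        by_cases hij : i ≤ j
        · by_cases hc : j - i ≤ r - t
          · rw [if_pos hc]
            have hexp : (n-j-(t-i))-((r-t)-(j-i)) = n - r := by omega
            have hch : (n-j).choose (t-i) * ((n-j-(t-i)).choose ((r-t)-(j-i)))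
                = (n-j).choose (r-j) * ((r-j).choose (t-i)) := by
              have h1 : r - j ≤ n - j := by omega
              have h2 : t - i ≤ r - j := by omega
              have := Nat.choose_mul (n := n - j) h2
              rw [this]
              congr 2
              omega
            rw [hexp]
            have hc2 := congrArg (fun m : ℕ => (m : ℝ)) hch
            push_cast at hc2
            linear_combination (B j * (q-1)^(t-i) * ((j.choose i : ℕ) : ℝ) * (-1:ℝ)^i * q^(n-r)) * hc2
          · rw [if_neg hc]
            have : (r-j).choose (t-i) = 0 := Nat.choose_eq_zero_of_lt (by omega)
            rw [this]
            push_cast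
            ring
        · have h0 : j.choose i = 0 := Nat.choose_eq_zero_of_lt (by omega)
          rw [h0]
          push_cast
          ring
      · intro j hj hjr
        rw [Finset.mem_range] at hj
        rw [Finset.mem_range, not_lt] at hjr
        simp only [hg, Nat.sub_sub_self hit]
        by_cases hij : i ≤ j
        · rw [if_neg (by omega : ¬ (j - i ≤ r - t))]
          ring
        · rw [Nat.choose_eq_zero_of_lt (by omega : j < i)]
          push_cast
          ring
    calc q ^ ((k : ℤ) - (n : ℤ)) * ∑ j ∈ Finset.range (n+1), B j * ∑ d ∈ Finset.range (t+1), g j d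
        = q ^ ((k : ℤ) - (n : ℤ)) * ∑ i ∈ Finset.range (t+1), ∑ j ∈ Finset.range (n+1), B j * g j (t-i) := by
          rw [Finset.sum_comm]
          congr 1
          apply Finset.sum_congr rfl; intro j _
          rw [hrefl j, Finset.mul_sum]
      _ = q ^ ((k : ℤ) - (n : ℤ)) * ∑ i ∈ Finset.range (t+1), ((-1:ℝ)^i * (q-1)^(t-i) * q^(n-r) *
            ∑ j ∈ Finset.range (r+1), ((n - j).choose (r - j) : ℝ) * (j.choose i : ℝ) * ((r - j).choose (t - i) : ℝ) * B j) := by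
          congr 1
          exact Finset.sum_congr rfl key
      _ = (q ^ ((k : ℤ) - (n : ℤ)) * q^(n-r)) * ∑ i ∈ Finset.range (t+1), ((-1:ℝ)^i * (q-1)^(t-i) *
            ∑ j ∈ Finset.range (r+1), ((n - j).choose (r - j) : ℝ) * (j.choose i : ℝ) * ((r - j).choose (t - i) : ℝ) * B j) := by
          rw [Finset.mul_sum, Finset.mul_sum]
          apply Finset.sum_congr rfl; intro i _
          ring
      _ = q ^ ((k : ℤ) - (r : ℤ)) * ∑ i ∈ Finset.range (t+1), ((-1:ℝ)^i * (q-1)^(t-i) *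
            ∑ j ∈ Finset.range (r+1), ((n - j).choose (r - j) : ℝ) * (j.choose i : ℝ) * ((r - j).choose (t - i) : ℝ) * B j) := by
          congr 1
          rw [← zpow_natCast q (n-r), ← zpow_add₀ hqne]
          congr 1
          push_cast [Nat.cast_sub hrn]
          ring
  rw [← e1, hPAPB, e2, e3]
end

section
/- Let q be a real number, k ≤ n natural numbers, and A_0,…,A_n and B_0,…,B_n real numbers such that for every r with 0 ≤ r ≤ n: A_r = q^{k-n} Σ_{j=0}^n B_j Σ_{i=0}^r (-1)^i C(n-j, r-i) C(j, i) (q-1)^{r-i}. Then the polynomial identity Σ_{j=0}^n A_j x^{n-j} y^j = q^{k-n} Σ_{j=0}^n B_j (x+(q-1)y)^{n-j} (x-y)^j holds. -/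
open Finset

lemma key_expand (q x y : ℝ) {n j : ℕ} (hj : j ≤ n) :
    ∑ r ∈ Finset.range (n + 1),
        (∑ i ∈ Finset.range (r + 1),
          (-1 : ℝ) ^ i * ((n - j).choose (r - i) : ℝ) * (j.choose i : ℝ) * (q - 1) ^ (r - i))
          * (x ^ (n - r) * y ^ r)
    = (x + (q - 1) * y) ^ (n - j) * (x - y) ^ j := by
  rw [add_pow, sub_pow, Finset.sum_mul_sum]
  simp only [Finset.sum_mul]
  rw [Finset.sum_sigma']
  rw [← Finset.sum_product']
  have hvanish : ∀ p ∈ (Finset.range (n + 1)).sigma fun r => Finset.range (r + 1),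
      ((-1:ℝ) ^ p.snd * ((n - j).choose (p.fst - p.snd):ℝ) * (j.choose p.snd:ℝ)
        * (q - 1) ^ (p.fst - p.snd) * (x ^ (n - p.fst) * y ^ p.fst)) ≠ 0 →
      (p.snd ≤ j ∧ p.fst - p.snd ≤ n - j) := by
    intro p hp hne
    by_contra hc
    push_neg at hc
    apply hne
    rcases Nat.lt_or_ge j p.snd with h1 | h1
    · rw [Nat.choose_eq_zero_of_lt h1]; simp
    · rw [Nat.choose_eq_zero_of_lt (show n - j < p.fst - p.snd by omega)]; simp
  rw [← Finset.sum_filter_of_ne hvanish]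
  refine Finset.sum_nbij' (fun p => (n - j - (p.fst - p.snd), j - p.snd))
    (fun p => ⟨(j - p.2) + (n - j - p.1), j - p.2⟩) ?_ ?_ ?_ ?_ ?_
  · intro p hp
    simp only [Finset.mem_filter, Finset.mem_sigma, Finset.mem_range,
      Finset.mem_product] at *
    omega
  · intro p hp
    simp only [Finset.mem_filter, Finset.mem_sigma, Finset.mem_range,
      Finset.mem_product] at *
    omega
  · intro p hp
    simp only [Finset.mem_filter, Finset.mem_sigma, Finset.mem_range] at hp
    refine Sigma.ext ?_ (heq_of_eq ?_) <;> simp <;> omega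
  · intro p hp
    simp only [Finset.mem_product, Finset.mem_range] at hp
    refine Prod.ext ?_ ?_ <;> simp <;> omega
  · intro p hp
    simp only [Finset.mem_filter, Finset.mem_sigma, Finset.mem_range] at hp
    obtain ⟨⟨hr, hi⟩, hij, hs⟩ := hp
    obtain ⟨r, i⟩ := p
    simp only at *
    have e1 : (n - j).choose (n - j - (r - i)) = (n - j).choose (r - i) :=
      Nat.choose_symm (by omega)
    have e2 : j.choose (j - i) = j.choose i := Nat.choose_symm (by omega)
    have e3 : ((-1 : ℝ)) ^ (j - i + j) = (-1) ^ i := by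
      rw [show j - i + j = i + 2 * (j - i) by omega, pow_add, pow_mul]
      simp
    rw [e1, e2, e3]
    rw [show n - j - (n - j - (r - i)) = r - i by omega]
    rw [mul_pow, show j - (j - i) = i by omega]
    have ex : x ^ (n - r) = x ^ (n - j - (r - i)) * x ^ (j - i) := by
      rw [← pow_add]; congr 1; omega
    have ey : y ^ r = y ^ (r - i) * y ^ i := by
      rw [← pow_add]; congr 1; omega
    rw [ex, ey]; ring

theorem form2_to_mac (q : ℝ) (k n : ℕ) (hkn : k ≤ n) (A B : ℕ → ℝ)
    (h : ∀ r ≤ n,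
      A r = q ^ ((k : ℤ) - (n : ℤ)) *
        ∑ j ∈ Finset.range (n + 1), B j *
          ∑ i ∈ Finset.range (r + 1),
            (-1 : ℝ) ^ i * ((n - j).choose (r - i) : ℝ) * (j.choose i : ℝ) * (q - 1) ^ (r - i)) :
    ∀ x y : ℝ,
      ∑ j ∈ Finset.range (n + 1), A j * x ^ (n - j) * y ^ j =
      q ^ ((k : ℤ) - (n : ℤ)) *
        ∑ j ∈ Finset.range (n + 1), B j * (x + (q - 1) * y) ^ (n - j) * (x - y) ^ j := by
  intro x y
  have main : ∀ r ∈ Finset.range (n + 1), A r * x ^ (n - r) * y ^ r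
      = ∑ j ∈ Finset.range (n + 1), q ^ ((k : ℤ) - (n : ℤ)) * (B j *
          ((∑ i ∈ Finset.range (r + 1),
            (-1 : ℝ) ^ i * ((n - j).choose (r - i) : ℝ) * (j.choose i : ℝ) * (q - 1) ^ (r - i))
            * (x ^ (n - r) * y ^ r))) := by
    intro r hr
    rw [h r (Nat.lt_succ_iff.mp (Finset.mem_range.mp hr))]
    rw [Finset.mul_sum, Finset.sum_mul, Finset.sum_mul]
    refine Finset.sum_congr rfl fun j _ => by ring
  rw [Finset.sum_congr rfl main, Finset.sum_comm, Finset.mul_sum]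
  refine Finset.sum_congr rfl fun j hjm => ?_
  have hj : j ≤ n := Nat.lt_succ_iff.mp (Finset.mem_range.mp hjm)
  calc ∑ r ∈ Finset.range (n + 1), q ^ ((k : ℤ) - (n : ℤ)) * (B j *
          ((∑ i ∈ Finset.range (r + 1),
            (-1 : ℝ) ^ i * ((n - j).choose (r - i) : ℝ) * (j.choose i : ℝ) * (q - 1) ^ (r - i))
            * (x ^ (n - r) * y ^ r)))
      = q ^ ((k : ℤ) - (n : ℤ)) * (B j * ∑ r ∈ Finset.range (n + 1),
          (∑ i ∈ Finset.range (r + 1),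
            (-1 : ℝ) ^ i * ((n - j).choose (r - i) : ℝ) * (j.choose i : ℝ) * (q - 1) ^ (r - i))
            * (x ^ (n - r) * y ^ r)) := by
        rw [Finset.mul_sum, Finset.mul_sum]
    _ = q ^ ((k : ℤ) - (n : ℤ)) * (B j * ((x + (q - 1) * y) ^ (n - j) * (x - y) ^ j)) := by
        rw [key_expand q x y hj]
    _ = q ^ ((k : ℤ) - (n : ℤ)) * (B j * (x + (q - 1) * y) ^ (n - j) * (x - y) ^ j) := by ring
end

section
/- Let q > 0 be a real number, k ≤ n natural numbers, and A_0,…,A_n and B_0,…,B_n real numbers such that for every r with 0 ≤ r ≤ n: Σ_{j=0}^n C(j, r) A_j = q^{k-r} Σ_{j=0}^n (-1)^j (q-1)^{r-j} C(n-j, r-j) B_j. Then Σ_{j=0}^n A_j x^{n-j} y^j = q^{k-n} Σ_{j=0}^n B_j (x+(q-1)y)^{n-j} (x-y)^j as polynomials. -/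
open Finset

-- LHS expansion into x^(n-r) (y-x)^r basis
lemma lhs_expand (x y : ℝ) (n : ℕ) (A : ℕ → ℝ) :
    ∑ j ∈ Finset.range (n + 1), A j * x ^ (n - j) * y ^ j
    = ∑ r ∈ Finset.range (n + 1),
        (∑ j ∈ Finset.range (n + 1), (j.choose r : ℝ) * A j) * (x ^ (n - r) * (y - x) ^ r) := by
  have step1 : ∀ j ∈ Finset.range (n + 1),
      A j * x ^ (n - j) * y ^ j
      = ∑ r ∈ Finset.range (n + 1),
          (j.choose r : ℝ) * A j * (x ^ (n - r) * (y - x) ^ r) := by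
    intro j hj
    rw [Finset.mem_range, Nat.lt_succ_iff] at hj
    have hy : y ^ j = ∑ r ∈ Finset.range (j + 1),
        (y - x) ^ r * x ^ (j - r) * (j.choose r : ℝ) := by
      rw [← add_pow, sub_add_cancel]
    rw [hy, Finset.mul_sum]
    rw [Finset.sum_subset (Finset.range_subset_range.mpr (Nat.succ_le_succ hj))
      (fun r hr hr' => by
        rw [Finset.mem_range, Nat.lt_succ_iff] at hr'
        have : j < r := by omega
        simp [Nat.choose_eq_zero_of_lt this])]
    refine Finset.sum_congr rfl fun r hr => ?_
    rw [Finset.mem_range, Nat.lt_succ_iff] at hr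
    by_cases hrj : r ≤ j
    · have hxp : x ^ (n - j) * x ^ (j - r) = x ^ (n - r) := by
        rw [← pow_add]; congr 1; omega
      calc A j * x ^ (n - j) * ((y - x) ^ r * x ^ (j - r) * (j.choose r : ℝ))
          = (j.choose r : ℝ) * A j * ((x ^ (n - j) * x ^ (j - r)) * (y - x) ^ r) := by ring
        _ = (j.choose r : ℝ) * A j * (x ^ (n - r) * (y - x) ^ r) := by rw [hxp]
    · have : j < r := by omega
      simp [Nat.choose_eq_zero_of_lt this]
  rw [Finset.sum_congr rfl step1, Finset.sum_comm]
  exact Finset.sum_congr rfl fun r _ => by rw [Finset.sum_mul]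

-- RHS expansion, per j
lemma rhs_expand (q x y : ℝ) (hq : q ≠ 0) (k n j : ℕ) (hj : j ≤ n) (b : ℝ) :
    ∑ r ∈ Finset.range (n + 1),
      q ^ ((k : ℤ) - (r : ℤ)) *
        (if j ≤ r then (-1 : ℝ) ^ j * (q - 1) ^ (r - j) * ((n - j).choose (r - j) : ℝ) * b else 0)
        * (x ^ (n - r) * (y - x) ^ r)
    = q ^ ((k : ℤ) - (n : ℤ)) * (b * (x + (q - 1) * y) ^ (n - j) * (x - y) ^ j) := by
  have hstep : ∀ r ∈ Finset.range (n + 1),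
      q ^ ((k : ℤ) - (r : ℤ)) *
        (if j ≤ r then (-1 : ℝ) ^ j * (q - 1) ^ (r - j) * ((n - j).choose (r - j) : ℝ) * b else 0)
        * (x ^ (n - r) * (y - x) ^ r)
      = if j ≤ r then q ^ ((k : ℤ) - (r : ℤ)) *
          ((-1 : ℝ) ^ j * (q - 1) ^ (r - j) * ((n - j).choose (r - j) : ℝ) * b)
          * (x ^ (n - r) * (y - x) ^ r) else 0 := by
    intro r _
    split <;> simp
  rw [Finset.sum_congr rfl hstep, ← Finset.sum_filter]
  have hfil : (Finset.range (n + 1)).filter (fun r => j ≤ r) = Finset.Icc j n := by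
    ext r; simp [Nat.lt_succ_iff, and_comm]
  rw [hfil, show Finset.Icc j n = Finset.Ico j (n+1) from (Finset.Ico_add_one_right_eq_Icc j n).symm, Finset.sum_Ico_eq_sum_range]
  have hxy : x + (q - 1) * y = (q - 1) * (y - x) + q * x := by ring
  have hsub : x - y = -(y - x) := by ring
  rw [hxy, add_pow]
  rw [Finset.mul_sum, Finset.sum_mul, Finset.mul_sum]
  have hn : n + 1 - j = n - j + 1 := by omega
  rw [hn]
  refine Finset.sum_congr rfl fun i hi => ?_
  rw [Finset.mem_range, Nat.lt_succ_iff] at hi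
  have h1 : j + i - j = i := by omega
  have h2 : n - (j + i) = n - j - i := by omega
  rw [h1, h2]
  have hq1 : q ^ ((k : ℤ) - ((j + i : ℕ) : ℤ))
      = q ^ ((k : ℤ) - (n : ℤ)) * q ^ ((n - j - i : ℕ)) := by
    rw [← zpow_natCast q (n - j - i), ← zpow_add₀ hq]
    congr 1
    have : ((n - j - i : ℕ) : ℤ) = (n : ℤ) - j - i := by omega
    rw [this]; push_cast; ring
  rw [hq1]
  rw [mul_pow, mul_pow, pow_add, hsub, neg_pow (y - x)]
  ring

theorem form3_to_mac (q : ℝ) (hq : 0 < q) (k n : ℕ) (hkn : k ≤ n) (A B : ℕ → ℝ)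
    (h : ∀ r ≤ n,
      ∑ j ∈ Finset.range (n + 1), (j.choose r : ℝ) * A j =
      q ^ ((k : ℤ) - (r : ℤ)) *
        ∑ j ∈ Finset.range (n + 1),
          if j ≤ r then
            (-1 : ℝ) ^ j * (q - 1) ^ (r - j) * ((n - j).choose (r - j) : ℝ) * B j
          else 0) :
    ∀ x y : ℝ,
      ∑ j ∈ Finset.range (n + 1), A j * x ^ (n - j) * y ^ j =
      q ^ ((k : ℤ) - (n : ℤ)) *
        ∑ j ∈ Finset.range (n + 1), B j * (x + (q - 1) * y) ^ (n - j) * (x - y) ^ j := by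
  intro x y
  rw [lhs_expand]
  have step : ∀ r ∈ Finset.range (n + 1),
      (∑ j ∈ Finset.range (n + 1), (j.choose r : ℝ) * A j) * (x ^ (n - r) * (y - x) ^ r)
      = ∑ j ∈ Finset.range (n + 1),
          q ^ ((k : ℤ) - (r : ℤ)) *
            (if j ≤ r then
              (-1 : ℝ) ^ j * (q - 1) ^ (r - j) * ((n - j).choose (r - j) : ℝ) * B j
            else 0) * (x ^ (n - r) * (y - x) ^ r) := by
    intro r hr
    rw [Finset.mem_range, Nat.lt_succ_iff] at hr
    rw [h r hr, Finset.mul_sum, Finset.sum_mul]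
  rw [Finset.sum_congr rfl step, Finset.sum_comm, Finset.mul_sum]
  refine Finset.sum_congr rfl fun j hj => ?_
  rw [Finset.mem_range, Nat.lt_succ_iff] at hj
  rw [rhs_expand q x y (ne_of_gt hq) k n j hj (B j)]
end

section
/- Let q > 0 be a real number, k ≤ n natural numbers, and A_0,…,A_n and B_0,…,B_n real numbers such that for every r with 0 ≤ r ≤ n: Σ_{j=0}^n C(n-j, r) A_j = q^{k-r} Σ_{j=0}^n C(n-j, r-j) B_j. Then Σ_{j=0}^n A_j x^{n-j} y^j = q^{k-n} Σ_{j=0}^n B_j (x+(q-1)y)^{n-j} (x-y)^j as polynomials. -/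
open Finset

theorem form4_to_mac (q : ℝ) (hq : 0 < q) (k n : ℕ) (hkn : k ≤ n) (A B : ℕ → ℝ)
    (h : ∀ r ≤ n,
      ∑ j ∈ Finset.range (n + 1), ((n - j).choose r : ℝ) * A j =
      q ^ ((k : ℤ) - (r : ℤ)) *
        ∑ j ∈ Finset.range (n + 1),
          if j ≤ r then ((n - j).choose (r - j) : ℝ) * B j else 0) :
    ∀ x y : ℝ,
      ∑ j ∈ Finset.range (n + 1), A j * x ^ (n - j) * y ^ j =
      q ^ ((k : ℤ) - (n : ℤ)) *
        ∑ j ∈ Finset.range (n + 1), B j * (x + (q - 1) * y) ^ (n - j) * (x - y) ^ j := by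
  intro x y
  have hq0 : q ≠ 0 := ne_of_gt hq
  set u := x - y with hu
  -- Expansion of the left-hand side terms
  have key1 : ∀ j ∈ range (n+1), A j * x ^ (n - j) * y ^ j =
      ∑ i ∈ range (n+1), ((n-j).choose i : ℝ) * A j * (u ^ i * y ^ (n-i)) := by
    intro j hj
    rw [mem_range] at hj
    have hjn : j ≤ n := Nat.lt_succ_iff.mp hj
    have hx : x = u + y := by rw [hu]; ring
    have hsh : ∑ i ∈ range (n-j+1), ((n-j).choose i : ℝ) * A j * (u ^ i * y ^ (n-i))
             = ∑ i ∈ range (n+1), ((n-j).choose i : ℝ) * A j * (u ^ i * y ^ (n-i)) := by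
      apply Finset.sum_subset (Finset.range_subset_range.mpr (by omega))
      intro i _ hi
      rw [mem_range, not_lt] at hi
      rw [Nat.choose_eq_zero_of_lt (by omega)]
      simp
    rw [← hsh, hx, add_pow, Finset.mul_sum, Finset.sum_mul]
    apply Finset.sum_congr rfl
    intro i hi
    rw [mem_range] at hi
    have hpow : y ^ (n-j-i) * y ^ j = y ^ (n-i) := by
      rw [← pow_add]; congr 1; omega
    calc A j * (u ^ i * y ^ (n-j-i) * ((n-j).choose i : ℝ)) * y ^ j
        = ((n-j).choose i : ℝ) * A j * (u ^ i * (y ^ (n-j-i) * y ^ j)) := by ring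
      _ = _ := by rw [hpow]
  -- Expansion of the right-hand side terms
  have key2 : ∀ j ∈ range (n+1), B j * (x + (q-1)*y) ^ (n - j) * u ^ j =
      ∑ i ∈ range (n+1),
        (if j ≤ i then ((n-j).choose (i-j) : ℝ) * B j * (q ^ (n-i) * (u ^ i * y ^ (n-i))) else 0) := by
    intro j hj
    rw [mem_range] at hj
    have hjn : j ≤ n := Nat.lt_succ_iff.mp hj
    have hx : x + (q-1)*y = u + q*y := by rw [hu]; ring
    have hz : ∑ i ∈ Finset.Ico 0 j,
        (if j ≤ i then ((n-j).choose (i-j) : ℝ) * B j * (q ^ (n-i) * (u ^ i * y ^ (n-i))) else 0) = 0 := by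
      apply Finset.sum_eq_zero
      intro i hi
      rw [Finset.mem_Ico] at hi
      rw [if_neg (by omega)]
    have hlen : n + 1 - j = n - j + 1 := by omega
    have htar : ∑ i ∈ range (n+1),
        (if j ≤ i then ((n-j).choose (i-j) : ℝ) * B j * (q ^ (n-i) * (u ^ i * y ^ (n-i))) else 0)
        = ∑ s ∈ range (n-j+1),
            ((n-j).choose s : ℝ) * B j * (q ^ (n-j-s) * (u ^ (j+s) * y ^ (n-j-s))) := by
      rw [Finset.range_eq_Ico,
          ← Finset.sum_Ico_consecutive _ (Nat.zero_le j) (by omega : j ≤ n+1),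
          hz, zero_add, Finset.sum_Ico_eq_sum_range, hlen,
          Finset.range_eq_Ico]
      apply Finset.sum_congr rfl
      intro s hs
      rw [Finset.mem_Ico] at hs
      rw [if_pos (by omega : j ≤ j + s)]
      have h1 : j + s - j = s := by omega
      have h2 : n - (j + s) = n - j - s := by omega
      rw [h1, h2]
    rw [htar, hx, add_pow, Finset.mul_sum, Finset.sum_mul]
    apply Finset.sum_congr rfl
    intro s hs
    rw [mem_range] at hs
    rw [mul_pow]
    have h3 : u ^ s * u ^ j = u ^ (j + s) := by rw [← pow_add]; congr 1; omega
    calc B j * (u ^ s * (q ^ (n-j-s) * y ^ (n-j-s)) * ((n-j).choose s : ℝ)) * u ^ j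
        = ((n-j).choose s : ℝ) * B j * (q ^ (n-j-s) * ((u ^ s * u ^ j) * y ^ (n-j-s))) := by ring
      _ = _ := by rw [h3]
  rw [Finset.sum_congr rfl key1, Finset.sum_congr rfl key2, Finset.sum_comm,
      Finset.sum_comm (s := range (n+1)) (t := range (n+1))
        (f := fun j i => (if j ≤ i then ((n-j).choose (i-j) : ℝ) * B j * (q ^ (n-i) * (u ^ i * y ^ (n-i))) else 0)),
      Finset.mul_sum]
  apply Finset.sum_congr rfl
  intro i hi
  rw [mem_range] at hi
  have hin : i ≤ n := Nat.lt_succ_iff.mp hi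
  have hsum1 : ∑ j ∈ range (n+1), ((n-j).choose i : ℝ) * A j * (u ^ i * y ^ (n-i))
      = (∑ j ∈ range (n+1), ((n-j).choose i : ℝ) * A j) * (u ^ i * y ^ (n-i)) := by
    rw [Finset.sum_mul]
  have hsum2 : ∑ j ∈ range (n+1),
      (if j ≤ i then ((n-j).choose (i-j) : ℝ) * B j * (q ^ (n-i) * (u ^ i * y ^ (n-i))) else 0)
      = (∑ j ∈ range (n+1), if j ≤ i then ((n-j).choose (i-j) : ℝ) * B j else 0)
        * (q ^ (n-i) * (u ^ i * y ^ (n-i))) := by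
    rw [Finset.sum_mul]
    apply Finset.sum_congr rfl
    intro j _
    split <;> simp
  rw [hsum1, hsum2, h i hin]
  have hpw : q ^ ((k : ℤ) - (i : ℤ)) = q ^ ((k : ℤ) - (n : ℤ)) * q ^ (n - i) := by
    rw [← zpow_natCast q (n - i), ← zpow_add₀ hq0]
    congr 1
    have : ((n - i : ℕ) : ℤ) = (n : ℤ) - (i : ℤ) := by
      push_cast [Nat.cast_sub hin]; ring
    rw [this]; ring
  rw [hpw]
  ring
end

section
/- Let q > 0 be a real number, k ≤ n natural numbers, and A_0,…,A_n and B_0,…,B_n real numbers such that for all t ≤ r ≤ n: Σ_{j=0}^n C(j,t) C(n-j, r-t) A_j = q^{k-r} Σ_{i=0}^t (-1)^i (q-1)^{t-i} Σ_{j=0}^r C(n-j, r-j) C(j, i) C(r-j, t-i) B_j. Then Σ_{j=0}^n A_j x^{n-j} y^j = q^{k-n} Σ_{j=0}^n B_j (x+(q-1)y)^{n-j} (x-y)^j as polynomials. -/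
open Finset

theorem form5_to_mac (q : ℝ) (hq : 0 < q) (k n : ℕ) (hkn : k ≤ n) (A B : ℕ → ℝ)
    (h : ∀ t r : ℕ, t ≤ r → r ≤ n →
      ∑ j ∈ Finset.range (n + 1), (j.choose t : ℝ) * ((n - j).choose (r - t) : ℝ) * A j =
      q ^ ((k : ℤ) - (r : ℤ)) *
        ∑ i ∈ Finset.range (t + 1),
          (-1 : ℝ) ^ i * (q - 1) ^ (t - i) *
            ∑ j ∈ Finset.range (r + 1),
              ((n - j).choose (r - j) : ℝ) * (j.choose i : ℝ) * ((r - j).choose (t - i) : ℝ) * B j) :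
    ∀ x y : ℝ,
      ∑ j ∈ Finset.range (n + 1), A j * x ^ (n - j) * y ^ j =
      q ^ ((k : ℤ) - (n : ℤ)) *
        ∑ j ∈ Finset.range (n + 1), B j * (x + (q - 1) * y) ^ (n - j) * (x - y) ^ j := by
  have hq0 : q ≠ 0 := ne_of_gt hq
  have h0 : ∀ s : ℕ, s ≤ n →
      ∑ j ∈ Finset.range (n + 1), ((n - j).choose s : ℝ) * A j =
      q ^ ((k : ℤ) - (s : ℤ)) * ∑ j ∈ Finset.range (s + 1), ((n - j).choose (s - j) : ℝ) * B j := by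
    intro s hs
    have := h 0 s (Nat.zero_le s) hs
    simpa using this
  intro x y
  set F : ℕ → ℕ → ℝ := fun s j =>
    q ^ ((k : ℤ) - (s : ℤ)) * (((n - j).choose (s - j) : ℝ) * B j) * ((x - y) ^ s * y ^ (n - s))
    with hF
  -- LHS equals the middle expression
  have hL : ∑ j ∈ Finset.range (n + 1), A j * x ^ (n - j) * y ^ j =
      ∑ s ∈ Finset.range (n + 1), ∑ j ∈ Finset.range (s + 1), F s j := by
    have step1 : ∑ j ∈ Finset.range (n + 1), A j * x ^ (n - j) * y ^ j =
        ∑ j ∈ Finset.range (n + 1), ∑ s ∈ Finset.range (n + 1),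
          ((n - j).choose s : ℝ) * A j * ((x - y) ^ s * y ^ (n - s)) := by
      refine Finset.sum_congr rfl fun j hj => ?_
      have hjn : j ≤ n := Nat.lt_succ_iff.mp (Finset.mem_range.mp hj)
      have hx : x ^ (n - j) = ((x - y) + y) ^ (n - j) := by ring_nf
      rw [hx, add_pow, Finset.mul_sum, Finset.sum_mul]
      rw [← Finset.sum_subset (Finset.range_subset_range.mpr (by omega :
          n - j + 1 ≤ n + 1))
        (by
          intro s hs hs'
          have : n - j < s := by
            simp only [Finset.mem_range] at hs hs' ⊢; omega
          rw [Nat.choose_eq_zero_of_lt this]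
          simp)]
      refine Finset.sum_congr rfl fun s hs => ?_
      have hsnj : s ≤ n - j := Nat.lt_succ_iff.mp (Finset.mem_range.mp hs)
      have hy : y ^ (n - j - s) * y ^ j = y ^ (n - s) := by
        rw [← pow_add]; congr 1; omega
      calc A j * ((x - y) ^ s * y ^ (n - j - s) * ((n - j).choose s : ℝ)) * y ^ j
          = ((n - j).choose s : ℝ) * A j * ((x - y) ^ s * (y ^ (n - j - s) * y ^ j)) := by ring
        _ = ((n - j).choose s : ℝ) * A j * ((x - y) ^ s * y ^ (n - s)) := by rw [hy]
    rw [step1, Finset.sum_comm]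
    refine Finset.sum_congr rfl fun s hs => ?_
    have hsn : s ≤ n := Nat.lt_succ_iff.mp (Finset.mem_range.mp hs)
    calc ∑ j ∈ Finset.range (n + 1), ((n - j).choose s : ℝ) * A j * ((x - y) ^ s * y ^ (n - s))
        = (∑ j ∈ Finset.range (n + 1), ((n - j).choose s : ℝ) * A j) * ((x - y) ^ s * y ^ (n - s)) := by
          rw [Finset.sum_mul]
      _ = (q ^ ((k : ℤ) - (s : ℤ)) * ∑ j ∈ Finset.range (s + 1), ((n - j).choose (s - j) : ℝ) * B j)
            * ((x - y) ^ s * y ^ (n - s)) := by rw [h0 s hsn]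
      _ = ∑ j ∈ Finset.range (s + 1), F s j := by
          simp only [hF]
          rw [Finset.mul_sum, Finset.sum_mul]
  -- RHS equals the middle expression
  have hR : q ^ ((k : ℤ) - (n : ℤ)) *
      ∑ j ∈ Finset.range (n + 1), B j * (x + (q - 1) * y) ^ (n - j) * (x - y) ^ j =
      ∑ s ∈ Finset.range (n + 1), ∑ j ∈ Finset.range (s + 1), F s j := by
    have step1 : q ^ ((k : ℤ) - (n : ℤ)) *
        ∑ j ∈ Finset.range (n + 1), B j * (x + (q - 1) * y) ^ (n - j) * (x - y) ^ j =
        ∑ j ∈ Finset.range (n + 1), ∑ s ∈ Finset.Ico j (n + 1), F s j := by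
      rw [Finset.mul_sum]
      refine Finset.sum_congr rfl fun j hj => ?_
      have hjn : j ≤ n := Nat.lt_succ_iff.mp (Finset.mem_range.mp hj)
      have hx : (x + (q - 1) * y) ^ (n - j) = ((x - y) + q * y) ^ (n - j) := by ring_nf
      rw [hx, add_pow, Finset.mul_sum, Finset.sum_mul, Finset.mul_sum]
      rw [Finset.sum_Ico_eq_sum_range]
      have hrange : n + 1 - j = n - j + 1 := by omega
      rw [hrange]
      refine Finset.sum_congr rfl fun m hm => ?_
      have hmnj : m ≤ n - j := Nat.lt_succ_iff.mp (Finset.mem_range.mp hm)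
      simp only [hF]
      have hchoose : (j + m) - j = m := by omega
      rw [hchoose]
      have hqpow : q ^ ((k : ℤ) - (n : ℤ)) * q ^ (n - j - m) =
          q ^ ((k : ℤ) - ((j + m : ℕ) : ℤ)) := by
        rw [← zpow_natCast q (n - j - m), ← zpow_add₀ hq0]
        congr 1
        have : ((n - j - m : ℕ) : ℤ) = (n : ℤ) - j - m := by omega
        rw [this]; push_cast; ring
      have hysplit : (q * y) ^ (n - j - m) = q ^ (n - j - m) * y ^ (n - j - m) := mul_pow q y _
      have hxy : (x - y) ^ m * (x - y) ^ j = (x - y) ^ (j + m) := by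
        rw [← pow_add]; congr 1; omega
      have hny : n - j - m = n - (j + m) := by omega
      calc q ^ ((k : ℤ) - (n : ℤ)) *
            (B j * ((x - y) ^ m * (q * y) ^ (n - j - m) * ((n - j).choose m : ℝ)) * (x - y) ^ j)
          = (q ^ ((k : ℤ) - (n : ℤ)) * q ^ (n - j - m)) *
              (((n - j).choose m : ℝ) * B j) * (((x - y) ^ m * (x - y) ^ j) * y ^ (n - j - m)) := by
            rw [hysplit]; ring
        _ = q ^ ((k : ℤ) - ((j + m : ℕ) : ℤ)) * (((n - j).choose m : ℝ) * B j) *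
              ((x - y) ^ (j + m) * y ^ (n - (j + m))) := by rw [hqpow, hxy, hny]
    rw [step1]
    rw [Finset.sum_comm' (t' := Finset.range (n + 1)) (s' := fun s => Finset.range (s + 1))]
    intro j s
    simp only [Finset.mem_range, Finset.mem_Ico]
    omega
  rw [hL, hR]
end
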